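/- Let l ≥ 2 and (m_1,…,m_l) = (1,0,…,0) (a one followed by l−1 zeros), and let b > 0 and x > 0 be such that H_{m_1,…,m_l}(x+b) is defined. (i) If 0 < b < 1 and 0 < x < 1−b, then H_{m_1,…,m_l}(x+b) = H_{m_1,…,m_l}(b) + Σ_{j=1}^{l} H_{m_1−b,…,m_j−b}(x) · H_{m_{j+1},…,m_l}(b). (ii) If b ≥ 1, then H_{m_1,…,m_l}(x+b) = H_{m_1,…,m_l}(b) − Σ_{j=1}^{l} H_{m_1−b,…,m_j−b}(x) · H_{m_{j+1},…,m_l}(b). In both cases the j = l term is ±H_{m_1−b,…,m_l−b}(x) and the empty polylogarithm at b equals 1. -/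

import Mathlib

open scoped Classical
open MeasureTheory intervalIntegral Filter

/-- The weight-one integrand: `f_0(x) = 1/x` and `f_a(x) = 1/(|a| − sign(a)·x)` for `a ≠ 0`. -/
noncomputable def GHf (a x : ℝ) : ℝ :=
  if a = 0 then 1 / x else 1 / (|a| - Real.sign a * x)

/-- The generalized harmonic polylogarithm `H_{m₁,…,m_w}(x)`: `1` for the empty word,
`(log x)^w / w!` for the all-zero word (note `Real.log` of a negative number equals the
log of its absolute value), and otherwise the oriented iterated integral
`∫_0^x f_{m₁}(y) H_{m₂,…,m_w}(y) dy`. -/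
noncomputable def GH : List ℝ → ℝ → ℝ
  | [], _ => 1
  | m :: p, x =>
    if m = 0 ∧ ∀ y ∈ p, y = (0:ℝ) then
      Real.log x ^ (p.length + 1) / ((p.length + 1).factorial : ℝ)
    else ∫ y in (0:ℝ)..x, GHf m y * GH p y

/-- `GHDef m⃗ x` states that the generalized harmonic polylogarithm `H_{m⃗}(x)` is
defined, i.e. all occurring iterated integrals converge. -/
def GHDef : List ℝ → ℝ → Prop
  | [], _ => True
  | m :: p, x =>
    (m = 0 ∧ ∀ y ∈ p, y = (0:ℝ)) ∨
    ((∀ y ∈ Set.uIoc (0:ℝ) x, GHDef p y) ∧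
      IntervalIntegrable (fun y => GHf m y * GH p y) MeasureTheory.volume 0 x)

lemma GH_zero_word (n : ℕ) (y : ℝ) :
    GH (List.replicate n 0) y = (Real.log y)^n / n.factorial := by
  cases n with
  | zero => simp [GH]
  | succ n =>
    rw [List.replicate_succ, GH,
      if_pos ⟨rfl, fun z hz => List.eq_of_mem_replicate hz⟩]
    simp

lemma GHf_neg (b : ℝ) (hb : 0 < b) (y : ℝ) : GHf (-b) y = 1/(y + b) := by
  rw [GHf, if_neg (by simpa using hb.ne'), abs_neg, abs_of_pos hb,
    Real.sign_of_neg (by linarith)]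
  ring_nf

lemma GHf_one (y : ℝ) : GHf 1 y = 1/(1 - y) := by
  rw [GHf, if_neg one_ne_zero, abs_one, Real.sign_of_pos one_pos, one_mul]

lemma GH_neg_word (b : ℝ) (hb : 0 < b) :
    ∀ (k : ℕ) (y : ℝ), 0 ≤ y →
      GH (List.replicate k (-b)) y
        = (Real.log (y+b) - Real.log b)^k / k.factorial := by
  intro k
  induction k with
  | zero => intro y _; simp [GH]
  | succ k ih =>
    intro y hy
    rw [List.replicate_succ, GH, if_neg (by rintro ⟨h, -⟩; simp at h; linarith)]
    rw [intervalIntegral.integral_congr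
      (g := fun s => 1/(s+b) * ((Real.log (s+b) - Real.log b)^k / k.factorial))
      (by intro s hs
          rw [Set.uIcc_of_le hy] at hs
          simp only [GHf_neg b hb, ih s hs.1])]
    have hF : ∀ s ∈ Set.uIcc (0:ℝ) y,
        HasDerivAt (fun z => (Real.log (z+b) - Real.log b)^(k+1) / ((k+1).factorial : ℝ))
          (1/(s+b) * ((Real.log (s+b) - Real.log b)^k / k.factorial)) s := by
      intro s hs
      rw [Set.uIcc_of_le hy] at hs
      have hsb : 0 < s + b := by linarith [hs.1]
      have h1 : HasDerivAt (fun z : ℝ => Real.log (z+b) - Real.log b) (1/(s+b)) s := by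
        have := ((Real.hasDerivAt_log hsb.ne').comp s
          ((hasDerivAt_id s).add_const b))
        simpa [one_div] using this.sub_const (Real.log b)
      have h2 := (h1.pow (k+1)).div_const ((k+1).factorial : ℝ)
      convert h2 using 1
      · rfl
      · rfl
      · rfl
      have : ((k+1).factorial : ℝ) = (k+1) * k.factorial := by
        rw [Nat.factorial_succ]; push_cast; ring
      rw [this]
      rw [Nat.add_sub_cancel]; push_cast
      have hk : (k.factorial : ℝ) ≠ 0 := Nat.cast_ne_zero.2 k.factorial_ne_zero
      field_simp
    rw [intervalIntegral.integral_eq_sub_of_hasDerivAt hF ?_]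
    · simp
    · apply ContinuousOn.intervalIntegrable
      rw [Set.uIcc_of_le hy]
      intro s hs
      have hsb : 0 < s + b := by linarith [hs.1]
      have hadd : ContinuousAt (fun s : ℝ => s + b) s := by fun_prop
      have hlog : ContinuousAt (fun s : ℝ => Real.log (s+b)) s :=
        hadd.log hsb.ne'
      exact ((continuousAt_const.div hadd hsb.ne').mul
        (((hlog.sub continuousAt_const).pow k).div_const _)).continuousWithinAt

lemma GH_one_word (t : ℕ) (z : ℝ) :
    GH (1 :: List.replicate t 0) z
      = ∫ y in (0:ℝ)..z, 1/(1-y) * ((Real.log y)^t / t.factorial) := by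
  rw [GH, if_neg (by rintro ⟨h, -⟩; norm_num at h)]
  congr 1
  funext y
  rw [GHf_one, GH_zero_word]

lemma binom_sum (A B : ℝ) (t : ℕ) :
    ∑ j ∈ Finset.range (t+1), A^j / j.factorial * (B^(t-j) / (t-j).factorial)
      = (A+B)^t / t.factorial := by
  rw [add_pow, Finset.sum_div]
  apply Finset.sum_congr rfl
  intro j hj
  rw [Finset.mem_range, Nat.lt_succ_iff] at hj
  rw [← Nat.choose_mul_factorial_mul_factorial hj]
  have h1 : (j.factorial : ℝ) ≠ 0 := Nat.cast_ne_zero.2 j.factorial_ne_zero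
  have h2 : ((t-j).factorial : ℝ) ≠ 0 := Nat.cast_ne_zero.2 (t-j).factorial_ne_zero
  have h3 : ((t.choose j : ℕ) : ℝ) ≠ 0 := Nat.cast_ne_zero.2 (Nat.choose_pos hj).ne'
  push_cast
  field_simp

lemma GH_A_word (b : ℝ) (hb : 0 < b) (hb1 : b ≠ 1) (ε : ℝ)
    (hε : ∀ y, GHf (1-b) y = ε/(1-b-y)) (j : ℕ) (u : ℝ) (hu : 0 ≤ u) :
    GH ((1-b) :: List.replicate j (-b)) u
      = ∫ y in (0:ℝ)..u, ε/(1-b-y) * ((Real.log (y+b) - Real.log b)^j / j.factorial) := by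
  rw [GH, if_neg (by rintro ⟨h, -⟩; exact hb1 (by linarith))]
  apply intervalIntegral.integral_congr
  intro s hs
  rw [Set.uIcc_of_le hu] at hs
  show GHf (1-b) s * GH (List.replicate j (-b)) s = _
  rw [hε, GH_neg_word b hb j s hs.1]

lemma core (t : ℕ) (b x ε : ℝ) (hb : 0 < b) (hb1 : b ≠ 1) (hx : 0 < x)
    (hε : ∀ y, GHf (1-b) y = ε/(1-b-y)) (hε2 : ε^2 = 1)
    (hden : ∀ y ∈ Set.Icc (0:ℝ) x, 1-b-y ≠ 0) :
    ∫ u in (0:ℝ)..x, 1/(1-(u+b)) * ((Real.log (u+b))^t / t.factorial)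
      = ε * ∑ j ∈ Finset.range (t+1),
          GH ((1-b) :: List.replicate j (-b)) x * ((Real.log b)^(t-j) / (t-j).factorial) := by
  set S : Set ℝ := Set.Ioi (-b) ∩ {y | 1-b-y ≠ 0} with hS
  have hSopen : IsOpen S :=
    isOpen_Ioi.inter (isOpen_ne_fun (by fun_prop) continuous_const)
  have hsub : Set.Icc (0:ℝ) x ⊆ S := by
    intro y hy
    exact ⟨by simp only [Set.mem_Ioi]; linarith [hy.1], hden y hy⟩
  set h : ℕ → ℝ → ℝ := fun j y =>
    ε/(1-b-y) * ((Real.log (y+b) - Real.log b)^j / j.factorial) with hh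
  have hcontS : ∀ j, ContinuousOn (h j) S := by
    intro j
    intro s hs
    have hsb : 0 < s + b := by have := hs.1; simp only [Set.mem_Ioi] at this; linarith
    have hadd : ContinuousAt (fun s : ℝ => s + b) s := by fun_prop
    have hlog : ContinuousAt (fun s : ℝ => Real.log (s+b)) s := hadd.log hsb.ne'
    exact ((continuousAt_const.div (by fun_prop) hs.2).mul
      (((hlog.sub continuousAt_const).pow j).div_const _)).continuousWithinAt
  have hA : ∀ u ∈ Set.uIcc (0:ℝ) x, ∀ j,
      HasDerivAt (fun v => ∫ y in (0:ℝ)..v, h j y) (h j u) u := by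
    intro u hu j
    rw [Set.uIcc_of_le hx.le] at hu
    refine intervalIntegral.integral_hasDerivAt_right ?_ ?_ ?_
    · apply ContinuousOn.intervalIntegrable
      rw [Set.uIcc_of_le hu.1]
      exact (hcontS j).mono (fun y hy => hsub ⟨hy.1, le_trans hy.2 hu.2⟩)
    · exact ((hcontS j).stronglyMeasurableAtFilter hSopen) u (hsub hu)
    · exact (hcontS j).continuousAt (hSopen.mem_nhds (hsub hu))
  have key : ∀ u ∈ Set.uIcc (0:ℝ) x,
      HasDerivAt (fun v => ε * ∑ j ∈ Finset.range (t+1),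
          (∫ y in (0:ℝ)..v, h j y) * ((Real.log b)^(t-j) / (t-j).factorial))
        (1/(1-(u+b)) * ((Real.log (u+b))^t / t.factorial)) u := by
    intro u hu
    have hsum : HasDerivAt (fun v => ∑ j ∈ Finset.range (t+1),
        (∫ y in (0:ℝ)..v, h j y) * ((Real.log b)^(t-j) / ((t-j).factorial : ℝ)))
        (∑ j ∈ Finset.range (t+1), h j u * ((Real.log b)^(t-j) / ((t-j).factorial : ℝ))) u :=
      HasDerivAt.fun_sum (fun j _ => (hA u hu j).mul_const _)
    have hd := hsum.const_mul ε
    convert hd using 1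
    · rfl
    · rfl
    have hu' : u ∈ Set.Icc (0:ℝ) x := by rwa [Set.uIcc_of_le hx.le] at hu
    have hub : 0 < u + b := by linarith [hu'.1]
    have : ∑ j ∈ Finset.range (t+1), h j u * ((Real.log b)^(t-j) / (t-j).factorial)
        = ε/(1-b-u) * ((Real.log (u+b))^t / t.factorial) := by
      have hbin := binom_sum (Real.log (u+b) - Real.log b) (Real.log b) t
      rw [sub_add_cancel] at hbin
      rw [← hbin, Finset.mul_sum]
      apply Finset.sum_congr rfl
      intro j _
      simp only [hh]
      ring
    rw [this]
    have hεε : ε * ε = 1 := by rw [← sq]; exact hε2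
    calc 1/(1-(u+b)) * ((Real.log (u+b))^t / t.factorial)
        = (ε*ε) * (1/(1-b-u) * ((Real.log (u+b))^t / t.factorial)) := by
          rw [hεε, one_mul]; ring_nf
      _ = ε * (ε/(1-b-u) * ((Real.log (u+b))^t / t.factorial)) := by ring
  have hint : IntervalIntegrable
      (fun u => 1/(1-(u+b)) * ((Real.log (u+b))^t / t.factorial)) volume 0 x := by
    apply ContinuousOn.intervalIntegrable
    rw [Set.uIcc_of_le hx.le]
    intro s hs
    have hsb : 0 < s + b := by linarith [hs.1]
    have hadd : ContinuousAt (fun s : ℝ => s + b) s := by fun_prop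
    have hlog : ContinuousAt (fun s : ℝ => Real.log (s+b)) s := hadd.log hsb.ne'
    have hden' : (1 : ℝ) - (s + b) ≠ 0 := by
      have := hden s hs; intro hc; apply this; linarith
    have h1 : ContinuousAt (fun u : ℝ => 1/(1-(u+b))) s :=
      continuousAt_const.div (by fun_prop) hden'
    exact (h1.mul ((hlog.pow t).div_const _)).continuousWithinAt
  rw [intervalIntegral.integral_eq_sub_of_hasDerivAt key hint]
  simp only [intervalIntegral.integral_same, zero_mul, Finset.sum_const_zero, mul_zero, sub_zero]
  congr 1
  apply Finset.sum_congr rfl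
  intro j _
  rw [GH_A_word b hb hb1 ε hε j x hx.le]

lemma sum_terms (t : ℕ) (b x : ℝ) :
    ∑ j ∈ Finset.range (t + 1),
        GH ((((1:ℝ) :: List.replicate t 0).take (j + 1)).map (fun m => m - b)) x *
          GH (((1:ℝ) :: List.replicate t 0).drop (j + 1)) b
      = ∑ j ∈ Finset.range (t+1),
          GH ((1-b) :: List.replicate j (-b)) x * ((Real.log b)^(t-j) / (t-j).factorial) := by
  apply Finset.sum_congr rfl
  intro j hj
  rw [Finset.mem_range, Nat.lt_succ_iff] at hj
  have h1 : (((1:ℝ) :: List.replicate t 0).take (j + 1)).map (fun m => m - b)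
      = (1-b) :: List.replicate j (-b) := by
    rw [List.take_succ_cons, List.take_replicate, min_eq_left hj, List.map_cons,
      List.map_replicate]
    norm_num
  have h2 : ((1:ℝ) :: List.replicate t 0).drop (j + 1) = List.replicate (t - j) 0 := by
    rw [List.drop_succ_cons, List.drop_replicate]
  rw [h1, h2, GH_zero_word]

/-- Argument shift `x + b → x` for the word `(1,0,…,0)` of length `l = t + 1 ≥ 2`:
(i) if `0 < b < 1` and `0 < x < 1 − b`, then
`H(x+b) = Σ_{j=0}^{l} H_{m₁−b,…,m_j−b}(x) · H_{m_{j+1},…,m_l}(b)`;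
(ii) if `b ≥ 1`, then
`H(x+b) = H(b) − Σ_{j=1}^{l} H_{m₁−b,…,m_j−b}(x) · H_{m_{j+1},…,m_l}(b)`. -/
theorem gh_shift_plus_b_word_one_zeros (t : ℕ) (ht : 1 ≤ t) (b : ℝ) (hb : 0 < b)
    (x : ℝ) (hx : 0 < x)
    (hdef : GHDef ((1:ℝ) :: List.replicate t 0) (x + b)) :
    (b < 1 → x < 1 - b →
      GH ((1:ℝ) :: List.replicate t 0) (x + b) =
        ∑ j ∈ Finset.range (t + 2),
          GH ((((1:ℝ) :: List.replicate t 0).take j).map (fun m => m - b)) x *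
            GH (((1:ℝ) :: List.replicate t 0).drop j) b) ∧
    (1 ≤ b →
      GH ((1:ℝ) :: List.replicate t 0) (x + b) =
        GH ((1:ℝ) :: List.replicate t 0) b -
          ∑ j ∈ Finset.range (t + 1),
            GH ((((1:ℝ) :: List.replicate t 0).take (j + 1)).map (fun m => m - b)) x *
              GH (((1:ℝ) :: List.replicate t 0).drop (j + 1)) b) := by
  have hxb : 0 < x + b := by linarith
  have hint : IntervalIntegrable (fun y => 1/(1-y) * ((Real.log y)^t / t.factorial))
      volume 0 (x+b) := by
    rcases hdef with ⟨h, -⟩ | ⟨-, hint⟩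
    · exact absurd h one_ne_zero
    · have hfe : (fun y => GHf 1 y * GH (List.replicate t 0) y)
          = fun y => 1/(1-y) * ((Real.log y)^t / t.factorial) := by
        funext y; rw [GHf_one, GH_zero_word]
      rwa [hfe] at hint
  have hshift : (∫ u in (0:ℝ)..x, 1/(1-(u+b)) * ((Real.log (u+b))^t / t.factorial))
      = ∫ y in b..(x+b), 1/(1-y) * ((Real.log y)^t / t.factorial) := by
    have h0 := intervalIntegral.integral_comp_add_right (a := 0) (b := x)
      (fun y => 1/(1-y) * ((Real.log y)^t / t.factorial)) b
    simpa using h0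
  have hsplit : GH (1 :: List.replicate t 0) (x+b)
      = GH (1 :: List.replicate t 0) b
        + ∫ u in (0:ℝ)..x, 1/(1-(u+b)) * ((Real.log (u+b))^t / t.factorial) := by
    rw [GH_one_word, GH_one_word, hshift]
    have e1 : IntervalIntegrable (fun y => 1/(1-y) * ((Real.log y)^t / t.factorial))
        volume 0 b := hint.mono_set (by
      rw [Set.uIcc_of_le hb.le, Set.uIcc_of_le hxb.le]
      exact Set.Icc_subset_Icc le_rfl (by linarith))
    have e2 : IntervalIntegrable (fun y => 1/(1-y) * ((Real.log y)^t / t.factorial))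
        volume b (x+b) := hint.mono_set (by
      rw [Set.uIcc_of_le (by linarith : b ≤ x + b), Set.uIcc_of_le hxb.le]
      exact Set.Icc_subset_Icc hb.le le_rfl)
    rw [intervalIntegral.integral_add_adjacent_intervals e1 e2]
  constructor
  · intro hb1 hxb1
    have hε : ∀ y, GHf (1-b) y = 1/(1-b-y) := by
      intro y
      rw [GHf, if_neg (by intro h; linarith), abs_of_pos (by linarith : (0:ℝ) < 1 - b),
        Real.sign_of_pos (by linarith : (0:ℝ) < 1 - b), one_mul]
    have hden : ∀ y ∈ Set.Icc (0:ℝ) x, 1-b-y ≠ 0 := by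
      intro y hy
      have := hy.2
      intro hc; nlinarith
    have hRHS : ∑ j ∈ Finset.range (t + 2),
        GH ((((1:ℝ) :: List.replicate t 0).take j).map (fun m => m - b)) x *
          GH (((1:ℝ) :: List.replicate t 0).drop j) b
        = (∑ j ∈ Finset.range (t+1),
            GH ((1-b) :: List.replicate j (-b)) x * ((Real.log b)^(t-j) / (t-j).factorial))
          + GH ((1:ℝ) :: List.replicate t 0) b := by
      rw [Finset.sum_range_succ' _ (t+1), sum_terms]
      simp only [List.take_zero, List.map_nil, List.drop_zero]
      rw [show GH ([] : List ℝ) x = 1 from rfl, one_mul]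
    rw [hsplit, core t b x 1 hb (by intro h; linarith) hx hε (one_pow 2) hden, one_mul,
      hRHS]
    ring
  · intro hb1
    rcases eq_or_lt_of_le hb1 with hbe | hbl
    · -- b = 1
      subst hbe
      have hcol : ∑ j ∈ Finset.range (t + 1),
          GH ((((1:ℝ) :: List.replicate t 0).take (j + 1)).map (fun m => m - 1)) x *
            GH (((1:ℝ) :: List.replicate t 0).drop (j + 1)) 1
          = GH ((0:ℝ) :: List.replicate t (-1)) x := by
        rw [sum_terms, Finset.sum_eq_single t]
        · rw [Nat.sub_self]
          norm_num
        · intro j hj hne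
          have hjt : j < t := lt_of_le_of_ne (Nat.lt_succ_iff.1 (Finset.mem_range.1 hj)) hne
          rw [Real.log_one, zero_pow (by omega : t - j ≠ 0), zero_div, mul_zero]
        · intro h; exact absurd (Finset.self_mem_range_succ t) h
      have hN : GH ((0:ℝ) :: List.replicate t (-1)) x
          = ∫ u in (0:ℝ)..x, (1/u) * ((Real.log (u+1))^t / t.factorial) := by
        rw [GH, if_neg (by
          rintro ⟨-, hall⟩
          have := hall (-1) (List.mem_replicate.2 ⟨by omega, rfl⟩)
          norm_num at this)]
        apply intervalIntegral.integral_congr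
        intro s hs
        rw [Set.uIcc_of_le hx.le] at hs
        show GHf 0 s * GH (List.replicate t (-1)) s = _
        rw [show GHf 0 s = 1/s from if_pos rfl, GH_neg_word 1 one_pos t s hs.1,
          Real.log_one, sub_zero]
      have hI : (∫ u in (0:ℝ)..x, 1/(1-(u+1)) * ((Real.log (u+1))^t / t.factorial))
          = - ∫ u in (0:ℝ)..x, (1/u) * ((Real.log (u+1))^t / t.factorial) := by
        rw [← intervalIntegral.integral_neg]
        apply intervalIntegral.integral_congr
        intro s _
        show 1/(1-(s+1)) * ((Real.log (s+1))^t / t.factorial) = _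
        rw [show (1:ℝ)-(s+1) = -s by ring, div_neg]
        ring
      rw [hsplit, hcol, hI, ← hN]
      ring
    · -- b > 1
      have hε : ∀ y, GHf (1-b) y = -1/(1-b-y) := by
        intro y
        rw [GHf, if_neg (by intro h; linarith), abs_of_neg (by linarith : 1 - b < (0:ℝ)),
          Real.sign_of_neg (by linarith : 1 - b < (0:ℝ))]
        rw [show -(1-b) - (-1) * y = -(1-b-y) by ring, div_neg, neg_div]
      have hden : ∀ y ∈ Set.Icc (0:ℝ) x, 1-b-y ≠ 0 := by
        intro y hy
        have := hy.1
        intro hc; nlinarith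
      rw [hsplit, core t b x (-1) hb (by intro h; linarith) hx hε (by norm_num) hden,
        sum_terms]
      ring
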